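/- arXiv:2501.07461 — 2 statements merged into one kernel-verified Lean document; each statement's English description precedes it below -/
import Mathlib

section
/- Let E be a real inner product space, 0 < m < L, and let f : E → ℝ be differentiable, m-strongly convex with L-Lipschitz gradient, and let x⋆ ∈ E satisfy ∇f(x⋆) = 0. Define V(x) := (L − m)( f(x) − f(x⋆) − (m/2)‖x − x⋆‖² ) − (1/2)‖∇f(x) − m(x − x⋆)‖². Then for every ρ with 0 ≤ ρ ≤ 1 and all x, y ∈ E: V(x) − ρ² V(y) ≤ ⟨ ∇f(x) − m(x − x⋆), L(x − x⋆) − ∇f(x) − ρ²( L(y − x⋆) − ∇f(y) ) ⟩. -/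
open scoped RealInnerProductSpace

/-- `g` is the gradient of `f` at `x` (stated via the Fréchet derivative and the
canonical map into the dual, so that no completeness assumption is needed). -/
def HasGradAt {E : Type*} [NormedAddCommGroup E] [InnerProductSpace ℝ E]
    (f : E → ℝ) (g : E) (x : E) : Prop :=
  HasFDerivAt f ((InnerProductSpace.toDualMap ℝ E) g : E →L[ℝ] ℝ) x

section AuxStorage
variable {E : Type*} [NormedAddCommGroup E] [InnerProductSpace ℝ E]

lemma StorageAux.hasDerivAt_line {f : E → ℝ} {f' : E → E}
    (hgrad : ∀ x, HasGradAt f (f' x) x) (a d : E) (t : ℝ) :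
    HasDerivAt (fun s : ℝ => f (a + s • d)) ⟪f' (a + t • d), d⟫ t := by
  have h1 : HasDerivAt (fun s : ℝ => a + s • d) d t := by
    simpa using ((hasDerivAt_id t).smul_const d).const_add a
  have hg : HasFDerivAt f ((InnerProductSpace.toDualMap ℝ E) (f' (a + t • d)) : E →L[ℝ] ℝ)
      (a + t • d) := hgrad _
  have hc := hg.comp_hasDerivAt t h1
  simp at hc
  exact hc

lemma StorageAux.subgrad {φ : E → ℝ} {w : E → E} (hc : ConvexOn ℝ Set.univ φ)
    (hw : ∀ x, HasGradAt φ (w x) x) (a b : E) :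
    φ a + ⟪w a, b - a⟫ ≤ φ b := by
  have hq : ConvexOn ℝ Set.univ (fun s : ℝ => φ (a + s • (b - a))) := by
    have := hc.comp_affineMap (AffineMap.lineMap a b : ℝ →ᵃ[ℝ] E)
    simpa [Function.comp_def, AffineMap.lineMap_apply_module', add_comm] using this
  have hd : HasDerivAt (fun s : ℝ => φ (a + s • (b - a))) ⟪w a, b - a⟫ 0 := by
    simpa using StorageAux.hasDerivAt_line hw a (b - a) 0
  have h := hq.le_slope_of_hasDerivAt (Set.mem_univ (0:ℝ)) (Set.mem_univ 1) one_pos hd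
  rw [slope_def_field] at h
  simp at h
  linarith

lemma StorageAux.descent {f : E → ℝ} {f' : E → E} {L : ℝ}
    (hgrad : ∀ x, HasGradAt f (f' x) x)
    (hlip : ∀ x y, ‖f' x - f' y‖ ≤ L * ‖x - y‖) (a b : E) :
    f b ≤ f a + ⟪f' a, b - a⟫ + L / 2 * ‖b - a‖ ^ 2 := by
  set d := b - a with hd
  set χ : ℝ → ℝ := fun t => f (a + t • d) - t * ⟪f' a, d⟫ - L / 2 * t ^ 2 * ‖d‖ ^ 2 with hχ
  have hder : ∀ t : ℝ, HasDerivAt χ (⟪f' (a + t • d) - f' a, d⟫ - L * t * ‖d‖ ^ 2) t := by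
    intro t
    have h1 := StorageAux.hasDerivAt_line hgrad a d t
    have h2 : HasDerivAt (fun t : ℝ => t * ⟪f' a, d⟫) ⟪f' a, d⟫ t := hasDerivAt_mul_const _
    have h3 : HasDerivAt (fun t : ℝ => L / 2 * t ^ 2 * ‖d‖ ^ 2) (L * t * ‖d‖ ^ 2) t := by
      have := ((hasDerivAt_pow 2 t).const_mul (L / 2)).mul_const (‖d‖ ^ 2)
      refine this.congr_deriv ?_
      ring
    have h4 := (h1.sub h2).sub h3
    refine h4.congr_deriv ?_
    rw [inner_sub_left]
  have hanti : AntitoneOn χ (Set.Icc 0 1) := by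
    apply antitoneOn_of_deriv_nonpos (convex_Icc 0 1)
    · exact fun t _ => ((hder t).continuousAt).continuousWithinAt
    · exact fun t _ => ((hder t).differentiableAt).differentiableWithinAt
    · intro t ht
      rw [interior_Icc] at ht
      rw [(hder t).deriv]
      have h5 : ⟪f' (a + t • d) - f' a, d⟫ ≤ L * t * ‖d‖ ^ 2 := by
        calc ⟪f' (a + t • d) - f' a, d⟫ ≤ ‖f' (a + t • d) - f' a‖ * ‖d‖ :=
              real_inner_le_norm _ _
          _ ≤ (L * ‖(a + t • d) - a‖) * ‖d‖ := by
              have := hlip (a + t • d) a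
              nlinarith [norm_nonneg (f' (a + t • d) - f' a), norm_nonneg d]
          _ = L * t * ‖d‖ ^ 2 := by
              have he : (a + t • d) - a = t • d := by abel
              rw [he, norm_smul, Real.norm_eq_abs, abs_of_pos ht.1]
              ring
      linarith
  have h6 := hanti (Set.mem_Icc.mpr ⟨le_refl 0, zero_le_one⟩)
      (Set.mem_Icc.mpr ⟨zero_le_one, le_refl 1⟩) zero_le_one
  simp only [hχ, zero_smul, add_zero, one_smul, zero_pow, mul_zero, zero_mul, sub_zero,
    one_pow, mul_one, one_mul] at h6
  have he : a + d = b := by rw [hd]; abel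
  rw [he] at h6
  linarith

end AuxStorage

/-- ρ²-weighted increment (dissipation) inequality for the storage function `V`. -/
theorem storage_rho_increment {E : Type*} [NormedAddCommGroup E] [InnerProductSpace ℝ E]
    (m L : ℝ) (hm : 0 < m) (hmL : m < L)
    (f : E → ℝ) (f' : E → E)
    (hgrad : ∀ x, HasGradAt f (f' x) x)
    (hsc : ConvexOn ℝ Set.univ (fun x => f x - m / 2 * ‖x‖ ^ 2))
    (hlip : ∀ x y, ‖f' x - f' y‖ ≤ L * ‖x - y‖)
    (xstar : E) (hstar : f' xstar = 0)
    (V : E → ℝ)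
    (hV : ∀ x, V x = (L - m) * (f x - f xstar - m / 2 * ‖x - xstar‖ ^ 2)
        - 1 / 2 * ‖f' x - m • (x - xstar)‖ ^ 2) :
    ∀ ρ : ℝ, 0 ≤ ρ → ρ ≤ 1 → ∀ x y : E,
      V x - ρ ^ 2 * V y ≤ ⟪f' x - m • (x - xstar),
        L • (x - xstar) - f' x - ρ ^ 2 • (L • (y - xstar) - f' y)⟫ := by
  set L' : ℝ := L - m with hL'def
  have hL' : 0 < L' := by simp only [hL'def]; linarith
  clear_value L'
  set g : E → ℝ := fun z => f z - f xstar - m / 2 * ‖z - xstar‖ ^ 2 with hg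
  set u : E → E := fun z => f' z - m • (z - xstar) with hu
  -- gradient of the strongly-convex-shifted function
  have hw : ∀ z : E, HasGradAt (fun x => f x - m / 2 * ‖x‖ ^ 2) (f' z - m • z) z := by
    intro z
    have h1 : HasFDerivAt (fun x : E => m / 2 * ‖x‖ ^ 2)
        ((m / 2) • (2 • (innerSL ℝ z)) : E →L[ℝ] ℝ) z :=
      ((hasStrictFDerivAt_norm_sq z).hasFDerivAt).const_smul (m / 2)
    have h2 := (hgrad z).sub h1
    have h3 : ((InnerProductSpace.toDualMap ℝ E) (f' z) : E →L[ℝ] ℝ)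
        - (m / 2) • (2 • (innerSL ℝ z)) =
        ((InnerProductSpace.toDualMap ℝ E) (f' z - m • z) : E →L[ℝ] ℝ) := by
      ext e
      simp [InnerProductSpace.toDualMap_apply_apply, inner_sub_left, real_inner_smul_left]
      ring
    rw [h3] at h2
    exact h2
  -- first-order convexity inequality for g
  have G1 : ∀ a b : E, g a + ⟪u a, b - a⟫ ≤ g b := by
    intro a b
    have hs := StorageAux.subgrad hsc hw a b
    have nb : ‖b - xstar‖ ^ 2 = ‖b‖ ^ 2 - 2 * ⟪b, xstar⟫ + ‖xstar‖ ^ 2 :=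
      norm_sub_sq_real b xstar
    have na : ‖a - xstar‖ ^ 2 = ‖a‖ ^ 2 - 2 * ⟪a, xstar⟫ + ‖xstar‖ ^ 2 :=
      norm_sub_sq_real a xstar
    have e1 : u a = (f' a - m • a) + m • xstar := by
      simp only [hu]
      module
    have hi : ⟪u a, b - a⟫ = ⟪f' a - m • a, b - a⟫ + m * (⟪b, xstar⟫ - ⟪a, xstar⟫) := by
      rw [e1]
      simp only [inner_add_left, inner_sub_right, real_inner_smul_left]
      rw [real_inner_comm xstar b, real_inner_comm xstar a]
      ring
    simp only [hg]
    rw [nb, na, hi]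
    linarith [hs]
  -- descent inequality for g
  have G2 : ∀ a b : E, g b ≤ g a + ⟪u a, b - a⟫ + L' / 2 * ‖b - a‖ ^ 2 := by
    intro a b
    have hs := StorageAux.descent hgrad hlip a b
    have nb : ‖b - xstar‖ ^ 2 = ‖b‖ ^ 2 - 2 * ⟪b, xstar⟫ + ‖xstar‖ ^ 2 :=
      norm_sub_sq_real b xstar
    have na : ‖a - xstar‖ ^ 2 = ‖a‖ ^ 2 - 2 * ⟪a, xstar⟫ + ‖xstar‖ ^ 2 :=
      norm_sub_sq_real a xstar
    have nba : ‖b - a‖ ^ 2 = ‖b‖ ^ 2 - 2 * ⟪a, b⟫ + ‖a‖ ^ 2 := by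
      rw [norm_sub_sq_real, real_inner_comm]
    have hi : ⟪u a, b - a⟫ = ⟪f' a, b - a⟫
        - m * (⟪a, b⟫ - ‖a‖ ^ 2 - ⟪b, xstar⟫ + ⟪a, xstar⟫) := by
      simp only [hu, inner_sub_left, inner_sub_right, real_inner_smul_left,
        real_inner_self_eq_norm_sq]
      rw [real_inner_comm xstar b, real_inner_comm xstar a]
      ring
    simp only [hg]
    rw [nb, na, hi]
    rw [nba] at hs ⊢
    simp only [hL'def]
    linarith [hs]
  -- cleared interpolation inequality
  have G3 : ∀ a b : E, 2 * L' * (g a - g b) ≤ 2 * L' * ⟪u a, a - b⟫ - ‖u a - u b‖ ^ 2 := by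
    intro a b
    set c : ℝ := L'⁻¹ with hc
    have hcL : L' * c = 1 := mul_inv_cancel₀ (ne_of_gt hL')
    set wpt : E := b - c • (u b - u a) with hwpt
    have h1 := G1 a wpt
    have h2 := G2 b wpt
    have ew1 : wpt - a = (b - a) + c • (u a - u b) := by
      rw [hwpt]; module
    have ew2 : wpt - b = c • (u a - u b) := by
      rw [hwpt]; module
    have hi1 : ⟪u a, wpt - a⟫ = ⟪u a, b - a⟫ + c * ⟪u a, u a - u b⟫ := by
      rw [ew1, inner_add_right, real_inner_smul_right]
    have hi2 : ⟪u b, wpt - b⟫ = c * ⟪u b, u a - u b⟫ := by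
      rw [ew2, real_inner_smul_right]
    have hn : ‖wpt - b‖ ^ 2 = c ^ 2 * ‖u a - u b‖ ^ 2 := by
      rw [ew2, norm_smul, Real.norm_eq_abs, mul_pow, sq_abs]
    have hdiff : ⟪u a, u a - u b⟫ - ⟪u b, u a - u b⟫ = ‖u a - u b‖ ^ 2 := by
      rw [← inner_sub_left, real_inner_self_eq_norm_sq]
    have hab : ⟪u a, a - b⟫ = -⟪u a, b - a⟫ := by
      rw [← inner_neg_right]; congr 1; abel
    -- combine
    clear_value c wpt g u
    have key : g a - g b ≤ -⟪u a, b - a⟫ - (1 / 2) * (c * ‖u a - u b‖ ^ 2) := by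
      have hsq : L' / 2 * (c ^ 2 * ‖u a - u b‖ ^ 2) = 1 / 2 * (c * ‖u a - u b‖ ^ 2) := by
        linear_combination (‖u a - u b‖ ^ 2 / 2 * c) * hcL
      have hdiff' : c * ⟪u a, u a - u b⟫ - c * ⟪u b, u a - u b⟫ = c * ‖u a - u b‖ ^ 2 := by
        linear_combination c * hdiff
      rw [hi1] at h1
      rw [hi2, hn, hsq] at h2
      set A : ℝ := ⟪u a, b - a⟫ with hA'
      set S1 : ℝ := ⟪u a, u a - u b⟫ with hS1
      set S2 : ℝ := ⟪u b, u a - u b⟫ with hS2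
      set N : ℝ := ‖u a - u b‖ ^ 2 with hN
      linarith [hdiff', h1, h2]
    rw [hab]
    have hmul := mul_le_mul_of_nonneg_left key (by positivity : (0:ℝ) ≤ 2 * L')
    have heq : 2 * L' * (-⟪u a, b - a⟫ - (1 / 2) * (c * ‖u a - u b‖ ^ 2))
        = 2 * L' * (-⟪u a, b - a⟫) - ‖u a - u b‖ ^ 2 := by
      linear_combination (-(‖u a - u b‖ ^ 2)) * hcL
    linarith [hmul, heq]
  -- specialize
  intro ρ hρ0 hρ1 x y
  have hgstar : g xstar = 0 := by simp [hg]
  have hustar : u xstar = 0 := by simp [hu, hstar]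
  have hA := G3 x xstar
  have hB := G3 x y
  rw [hgstar, hustar] at hA
  simp only [sub_zero] at hA
  -- rewrite V
  rw [hV x, hV y]
  -- rewrite the right-hand side vector
  have hvec : L • (x - xstar) - f' x - ρ ^ 2 • (L • (y - xstar) - f' y)
      = (L' • (x - xstar) - u x) - ρ ^ 2 • (L' • (y - xstar) - u y) := by
    simp only [hu, hL'def]
    module
  have hfx : f' x - m • (x - xstar) = u x := rfl
  have hfy : f' y - m • (y - xstar) = u y := rfl
  rw [hvec, hfx, hfy]
  have hrhs : ⟪u x, (L' • (x - xstar) - u x) - ρ ^ 2 • (L' • (y - xstar) - u y)⟫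
      = L' * ⟪u x, x - xstar⟫ - ‖u x‖ ^ 2
        - ρ ^ 2 * (L' * ⟪u x, y - xstar⟫ - ⟪u x, u y⟫) := by
    simp only [inner_sub_right, real_inner_smul_right, real_inner_self_eq_norm_sq]
  rw [hrhs]
  have hxy : ⟪u x, x - y⟫ = ⟪u x, x - xstar⟫ - ⟪u x, y - xstar⟫ := by
    rw [← inner_sub_right]; congr 1; abel
  rw [hxy] at hB
  have hnxy : ‖u x - u y‖ ^ 2 = ‖u x‖ ^ 2 - 2 * ⟪u x, u y⟫ + ‖u y‖ ^ 2 :=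
    norm_sub_sq_real _ _
  rw [hnxy] at hB
  have hgx : f x - f xstar - m / 2 * ‖x - xstar‖ ^ 2 = g x := rfl
  have hgy : f y - f xstar - m / 2 * ‖y - xstar‖ ^ 2 = g y := rfl
  rw [hgx, hgy]
  have hρsq : ρ ^ 2 ≤ 1 := by nlinarith
  have h1 := mul_le_mul_of_nonneg_left hA (by linarith : (0:ℝ) ≤ 1 - ρ ^ 2)
  have h2 := mul_le_mul_of_nonneg_left hB (sq_nonneg ρ)
  clear_value g u
  set A1 : ℝ := ⟪u x, x - xstar⟫
  set A2 : ℝ := ⟪u x, y - xstar⟫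
  set A3 : ℝ := ⟪u x, u y⟫
  linarith [h1, h2]
end

section
/- Let E be a real inner product space, 0 < m < L, and let f : E → ℝ be differentiable, m-strongly convex with L-Lipschitz gradient, and let x⋆ ∈ E satisfy ∇f(x⋆) = 0. Define V(x) := (L − m)( f(x) − f(x⋆) − (m/2)‖x − x⋆‖² ) − (1/2)‖∇f(x) − m(x − x⋆)‖². Then for all x ∈ E: V(x) ≤ ⟨ ∇f(x) − m(x − x⋆), L(x − x⋆) − ∇f(x) ⟩. -/
open scoped RealInnerProductSpace

section Aux

variable {E : Type*} [NormedAddCommGroup E] [InnerProductSpace ℝ E]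

lemma hasDerivAt_comp_line (f : E → ℝ) (f' : E → E)
    (hgrad : ∀ x, HasGradAt f (f' x) x) (a v : E) (t : ℝ) :
    HasDerivAt (fun s : ℝ => f (a + s • v)) ⟪f' (a + t • v), v⟫ t := by
  have hline : HasDerivAt (fun s : ℝ => a + s • v) v t := by
    simpa using ((hasDerivAt_id t).smul_const v).const_add a
  have h0 : HasFDerivAt f ((InnerProductSpace.toDualMap ℝ E) (f' (a + t • v)) : E →L[ℝ] ℝ)
      (a + t • v) := hgrad _
  have h := h0.comp_hasDerivAt t hline
  exact h

/-- Descent lemma from an `L`-Lipschitz gradient. -/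
lemma descent_lemma (f : E → ℝ) (f' : E → E) (L : ℝ)
    (hgrad : ∀ x, HasGradAt f (f' x) x)
    (hlip : ∀ x y, ‖f' x - f' y‖ ≤ L * ‖x - y‖) (a b : E) :
    f b ≤ f a + ⟪f' a, b - a⟫ + L / 2 * ‖b - a‖ ^ 2 := by
  set v := b - a with hv
  set χ : ℝ → ℝ := fun t => f (a + t • v) - t * ⟪f' a, v⟫ - L * t ^ 2 / 2 * ‖v‖ ^ 2 with hχ
  have hder : ∀ t : ℝ,
      HasDerivAt χ (⟪f' (a + t • v), v⟫ - ⟪f' a, v⟫ - L * t * ‖v‖ ^ 2) t := by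
    intro t
    have h1 := hasDerivAt_comp_line f f' hgrad a v t
    have h2 : HasDerivAt (fun t : ℝ => t * ⟪f' a, v⟫) ⟪f' a, v⟫ t := by
      simpa using (hasDerivAt_id t).mul_const ⟪f' a, v⟫
    have h3 : HasDerivAt (fun t : ℝ => L * t ^ 2 / 2 * ‖v‖ ^ 2) (L * t * ‖v‖ ^ 2) t := by
      have h4 := (((hasDerivAt_pow 2 t).const_mul L).div_const 2).mul_const (‖v‖ ^ 2)
      refine h4.congr_deriv ?_
      ring
    exact (h1.sub h2).sub h3
  have hcont : Continuous χ := by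
    have : Differentiable ℝ χ := fun t => (hder t).differentiableAt
    exact this.continuous
  have hmono : AntitoneOn χ (Set.Icc (0 : ℝ) 1) := by
    apply antitoneOn_of_deriv_nonpos (convex_Icc 0 1) hcont.continuousOn
    · intro t _
      exact (hder t).differentiableAt.differentiableWithinAt
    · intro t ht
      rw [(hder t).deriv]
      rw [interior_Icc] at ht
      have ht0 : (0 : ℝ) < t := ht.1
      have hb1 : ⟪f' (a + t • v), v⟫ - ⟪f' a, v⟫ = ⟪f' (a + t • v) - f' a, v⟫ := by
        rw [inner_sub_left]
      have hb2 : ⟪f' (a + t • v) - f' a, v⟫ ≤ ‖f' (a + t • v) - f' a‖ * ‖v‖ :=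
        real_inner_le_norm _ _
      have hb3 : ‖f' (a + t • v) - f' a‖ ≤ L * ‖t • v‖ := by
        have := hlip (a + t • v) a
        simpa using this
      have hb4 : ‖t • v‖ = t * ‖v‖ := by
        rw [norm_smul, Real.norm_eq_abs, abs_of_pos ht0]
      rw [hb4] at hb3
      have hb5 : ‖f' (a + t • v) - f' a‖ * ‖v‖ ≤ L * (t * ‖v‖) * ‖v‖ :=
        mul_le_mul_of_nonneg_right hb3 (norm_nonneg v)
      have hb6 : L * (t * ‖v‖) * ‖v‖ = L * t * ‖v‖ ^ 2 := by ring
      linarith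
  have h01 := hmono (Set.mem_Icc.2 ⟨le_refl 0, zero_le_one⟩)
    (Set.mem_Icc.2 ⟨zero_le_one, le_refl 1⟩) zero_le_one
  have hχ0 : χ 0 = f a := by simp [hχ]
  have hχ1 : χ 1 = f b - ⟪f' a, v⟫ - L / 2 * ‖v‖ ^ 2 := by
    have hb : a + (1 : ℝ) • v = b := by simp [hv]
    show f (a + (1 : ℝ) • v) - 1 * ⟪f' a, v⟫ - L * 1 ^ 2 / 2 * ‖v‖ ^ 2
        = f b - ⟪f' a, v⟫ - L / 2 * ‖v‖ ^ 2
    rw [hb]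
    ring
  rw [hχ0, hχ1] at h01
  linarith

/-- First-order condition for the convexity of `f - m/2 ‖·‖²`. -/
lemma convex_lower (f : E → ℝ) (f' : E → E) (m : ℝ)
    (hgrad : ∀ x, HasGradAt f (f' x) x)
    (hsc : ConvexOn ℝ Set.univ (fun x => f x - m / 2 * ‖x‖ ^ 2)) (a b : E) :
    f a - m / 2 * ‖a‖ ^ 2 + ⟪f' a - m • a, b - a⟫ ≤ f b - m / 2 * ‖b‖ ^ 2 := by
  set v := b - a with hv
  set ψ : ℝ → ℝ := fun t => f (a + t • v) - m / 2 * ‖a + t • v‖ ^ 2 with hψ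
  -- convexity of ψ
  have hψconv : ConvexOn ℝ Set.univ ψ := by
    have hA := hsc.comp_affineMap (AffineMap.lineMap a b : ℝ →ᵃ[ℝ] E)
    have heq : ((fun x => f x - m / 2 * ‖x‖ ^ 2) ∘ (AffineMap.lineMap a b : ℝ →ᵃ[ℝ] E)) = ψ := by
      funext t
      have hlm : (AffineMap.lineMap a b : ℝ →ᵃ[ℝ] E) t = a + t • (b - a) := by
        rw [AffineMap.lineMap_apply_module]
        module
      simp only [Function.comp, hlm, hψ, hv]
    have hpre : (AffineMap.lineMap a b : ℝ →ᵃ[ℝ] E) ⁻¹' Set.univ = Set.univ := by simp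
    rw [heq, hpre] at hA
    exact hA
  -- derivative of ψ at 0
  have hquad : (fun t : ℝ => m / 2 * ‖a + t • v‖ ^ 2)
      = fun t : ℝ => m / 2 * (‖a‖ ^ 2 + 2 * (t * ⟪a, v⟫) + t ^ 2 * ‖v‖ ^ 2) := by
    funext t
    rw [norm_add_sq_real, real_inner_smul_right, norm_smul, mul_pow, Real.norm_eq_abs, sq_abs]
  have hq' : HasDerivAt (fun t : ℝ => m / 2 * (‖a‖ ^ 2 + 2 * (t * ⟪a, v⟫) + t ^ 2 * ‖v‖ ^ 2))
      (m * ⟪a, v⟫) 0 := by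
    have h1 : HasDerivAt (fun t : ℝ => ‖a‖ ^ 2 + 2 * (t * ⟪a, v⟫) + t ^ 2 * ‖v‖ ^ 2)
        (2 * ⟪a, v⟫ + 2 * 0 * ‖v‖ ^ 2) 0 := by
      have ha : HasDerivAt (fun _ : ℝ => ‖a‖ ^ 2) 0 (0 : ℝ) := hasDerivAt_const _ _
      have hb : HasDerivAt (fun t : ℝ => 2 * (t * ⟪a, v⟫)) (2 * ⟪a, v⟫) (0 : ℝ) := by
        simpa using ((hasDerivAt_id (0 : ℝ)).mul_const ⟪a, v⟫).const_mul 2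
      have hc : HasDerivAt (fun t : ℝ => t ^ 2 * ‖v‖ ^ 2) (2 * 0 * ‖v‖ ^ 2) (0 : ℝ) := by
        simpa using (hasDerivAt_pow 2 (0 : ℝ)).mul_const (‖v‖ ^ 2)
      exact ((ha.add hb).add hc).congr_deriv (by ring)
    have := h1.const_mul (m / 2)
    refine this.congr_deriv ?_
    ring
  have hlin : HasDerivAt (fun t : ℝ => f (a + t • v)) ⟪f' a, v⟫ 0 := by
    have := hasDerivAt_comp_line f f' hgrad a v 0
    simpa using this
  have hψder : HasDerivAt ψ (⟪f' a - m • a, v⟫) 0 := by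
    have := hlin.sub (hquad ▸ hq' : HasDerivAt (fun t : ℝ => m / 2 * ‖a + t • v‖ ^ 2)
      (m * ⟪a, v⟫) 0)
    have heq2 : ⟪f' a, v⟫ - m * ⟪a, v⟫ = ⟪f' a - m • a, v⟫ := by
      rw [inner_sub_left, real_inner_smul_left]
    rw [heq2] at this
    exact this
  have hslope := hψconv.le_slope_of_hasDerivAt (Set.mem_univ (0 : ℝ)) (Set.mem_univ (1 : ℝ))
    zero_lt_one hψder
  have hψ0 : ψ 0 = f a - m / 2 * ‖a‖ ^ 2 := by simp [hψ]
  have hψ1 : ψ 1 = f b - m / 2 * ‖b‖ ^ 2 := by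
    have hb : a + v = b := by simp [hv]
    simp only [hψ, one_smul, hb]
  rw [slope_def_field] at hslope
  rw [hψ0, hψ1] at hslope
  have : ⟪f' a - m • a, v⟫ ≤ f b - m / 2 * ‖b‖ ^ 2 - (f a - m / 2 * ‖a‖ ^ 2) := by
    simpa using hslope
  linarith

end Aux

/-- The sector term dominates the initial value of the storage function `V`. -/
theorem storage_le_sector {E : Type*} [NormedAddCommGroup E] [InnerProductSpace ℝ E]
    (m L : ℝ) (hm : 0 < m) (hmL : m < L)
    (f : E → ℝ) (f' : E → E)
    (hgrad : ∀ x, HasGradAt f (f' x) x)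
    (hsc : ConvexOn ℝ Set.univ (fun x => f x - m / 2 * ‖x‖ ^ 2))
    (hlip : ∀ x y, ‖f' x - f' y‖ ≤ L * ‖x - y‖)
    (xstar : E) (hstar : f' xstar = 0)
    (V : E → ℝ)
    (hV : ∀ x, V x = (L - m) * (f x - f xstar - m / 2 * ‖x - xstar‖ ^ 2)
        - 1 / 2 * ‖f' x - m • (x - xstar)‖ ^ 2) :
    ∀ x : E, V x ≤ ⟪f' x - m • (x - xstar), L • (x - xstar) - f' x⟫ := by
  intro x
  have hL' : (0 : ℝ) < L - m := sub_pos.2 hmL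
  have hL'ne : L - m ≠ 0 := ne_of_gt hL'
  set w : E := x - xstar with hw
  set u : E := f' x - m • w with hu
  set z : E := xstar + (L - m)⁻¹ • u with hz
  -- convexity inequality between x and z
  have I1 := convex_lower f f' m hgrad hsc x z
  -- descent lemma between xstar and z
  have I2 := descent_lemma f f' L hgrad hlip xstar z
  rw [hstar] at I2
  simp only [inner_zero_left, add_zero] at I2
  -- key scalar inequality
  have key : f x - f xstar - m / 2 * ‖w‖ ^ 2
      ≤ ⟪u, w⟫ - (L - m)⁻¹ / 2 * ‖u‖ ^ 2 := by
    -- expand everything into inner products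
    have E1 : L / 2 * ‖z - xstar‖ ^ 2 - m / 2 * ‖z‖ ^ 2 + m / 2 * ‖x‖ ^ 2
        - ⟪f' x - m • x, z - x⟫
        = ⟪u, w⟫ - (L - m)⁻¹ / 2 * ‖u‖ ^ 2 + m / 2 * ‖w‖ ^ 2 := by
      simp only [hz, hu, hw]
      rw [← real_inner_self_eq_norm_sq, ← real_inner_self_eq_norm_sq,
        ← real_inner_self_eq_norm_sq, ← real_inner_self_eq_norm_sq,
        ← real_inner_self_eq_norm_sq]
      simp only [inner_sub_left, inner_sub_right, inner_add_left, inner_add_right,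
        inner_smul_left, inner_smul_right, RCLike.conj_to_real]
      rw [real_inner_comm xstar x, real_inner_comm (f' x) x, real_inner_comm (f' x) xstar]
      field_simp
      ring
    linarith [I1, I2, E1.le, E1.ge]
  -- rewrite the goal
  have hrhs : ⟪f' x - m • (x - xstar), L • (x - xstar) - f' x⟫
      = (L - m) * ⟪u, w⟫ - ‖u‖ ^ 2 := by
    have : L • (x - xstar) - f' x = (L - m) • w - u := by
      simp only [hu, hw]
      rw [sub_smul]
      abel
    rw [this]
    rw [show f' x - m • (x - xstar) = u from rfl]
    rw [inner_sub_right, inner_smul_right, real_inner_self_eq_norm_sq]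
  rw [hV x, hrhs]
  have hmul := mul_le_mul_of_nonneg_left key (le_of_lt hL')
  have hcancel : (L - m) * ((L - m)⁻¹ / 2 * ‖u‖ ^ 2) = 1 / 2 * ‖u‖ ^ 2 := by
    field_simp
  nlinarith [hmul]
end
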